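/- Let C > 0, R > 0, T0 ≥ 0 and v_src be a constant source voltage. Suppose v2 : ℝ → ℝ is differentiable and satisfies C·v2'(t) = (v_src - v2(t))/R for all t. Then the Joule-heat loss, ΔE_loss := ∫₀^{T0} ((v_src - v2(t))²/R) dt, equals (1/2)·C·(v_src - v2(0))²·(1 - exp(-2·T0/(C·R))). -/

import Mathlib

theorem source_router_energy_loss
    (C R T0 vsrc : ℝ) (hC : 0 < C) (hR : 0 < R) (hT0 : 0 ≤ T0)
    (v2 : ℝ → ℝ) (hd2 : Differentiable ℝ v2)
    (h2 : ∀ t, C * deriv v2 t = (vsrc - v2 t) / R) :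
    (∫ t in (0:ℝ)..T0, (vsrc - v2 t)^2 / R) =
      (1/2) * C * (vsrc - v2 0)^2 * (1 - Real.exp (-2 * T0 / (C * R))) := by
  have hCR : C * R ≠ 0 := by positivity
  set k : ℝ := 1 / (C * R) with hk
  have hdv : ∀ t, deriv v2 t = k * (vsrc - v2 t) := by
    intro t
    have h := h2 t
    rw [hk]
    field_simp at h ⊢
    linear_combination h
  -- g is constant
  set g : ℝ → ℝ := fun t => (vsrc - v2 t) * Real.exp (k * t) with hg
  have hgd : ∀ t, HasDerivAt g 0 t := by
    intro t
    have h1 : HasDerivAt v2 (k * (vsrc - v2 t)) t := by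
      rw [← hdv t]; exact (hd2 t).hasDerivAt
    have h2' : HasDerivAt (fun t => vsrc - v2 t) (-(k * (vsrc - v2 t))) t := by
      have := (hasDerivAt_const t vsrc).sub h1
      simp only [zero_sub] at this
      exact this
    have h3 : HasDerivAt (fun t => Real.exp (k * t)) (Real.exp (k * t) * k) t := by
      have := (Real.hasDerivAt_exp (k * t)).comp t
        ((hasDerivAt_id t).const_mul k)
      simp only [mul_one] at this
      exact this
    have : HasDerivAt g (-(k * (vsrc - v2 t)) * Real.exp (k * t) +
        (vsrc - v2 t) * (Real.exp (k * t) * k)) t := h2'.mul h3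
    convert this using 1
    ring
  have hgc : ∀ t, g t = g 0 := by
    intro t
    exact is_const_of_deriv_eq_zero (fun x => (hgd x).differentiableAt)
      (fun x => (hgd x).deriv) t 0
  have hsol : ∀ t, vsrc - v2 t = (vsrc - v2 0) * Real.exp (-(k * t)) := by
    intro t
    have := hgc t
    simp only [hg, mul_zero, Real.exp_zero, mul_one] at this
    have he : Real.exp (k * t) ≠ 0 := Real.exp_ne_zero _
    rw [Real.exp_neg]
    field_simp
    linarith
  have hint : (∫ t in (0:ℝ)..T0, (vsrc - v2 t)^2 / R)
      = (vsrc - v2 0)^2 / R * ∫ t in (0:ℝ)..T0, Real.exp ((-2*k) * t) := by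
    rw [← intervalIntegral.integral_const_mul]
    apply intervalIntegral.integral_congr
    intro t _
    show (vsrc - v2 t)^2 / R = (vsrc - v2 0)^2 / R * Real.exp (-2*k*t)
    rw [hsol t, mul_pow, sq (Real.exp _), ← Real.exp_add]
    ring_nf
  have hkpos : 0 < k := by rw [hk]; positivity
  have hk2 : (-2*k) ≠ 0 := by
    have : -2*k < 0 := by linarith
    exact this.ne
  rw [hint, intervalIntegral.integral_comp_mul_left Real.exp hk2,
    integral_exp]
  simp only [mul_zero, Real.exp_zero, smul_eq_mul]
  have hE : -2 * k * T0 = -2 * T0 / (C * R) := by rw [hk]; ring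
  rw [hE]
  rw [hk]
  field_simp
  ring
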